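/- Let a, b ∈ 𝔹² be distinct points, let m = d({0}, L[a,b]) be the Euclidean distance from the origin to the line through a and b, and let f : 𝔹² → 𝔹² be a holomorphic (analytic) function. Then tanh(h(f(a), f(b))/4) ≤ (1/√(1−m²)) · tanh(h(a,b)/4), where h is the Hilbert metric of the unit disk. -/

import Mathlib

open Complex ComplexConjugate

/-- The line through two points `a`, `b` in the complex plane. -/
noncomputable def lineThrough (a b : ℂ) : Set ℂ :=
  {z : ℂ | ∃ t : ℝ, z = a + (t : ℂ) * (b - a)}

/-- The Hilbert metric of the unit disk: for `a ≠ b`,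
`h(a,b) = log (|u-b||a-v| / (|u-a||b-v|))` where `u, v` are the intersection
points of the line through `a, b` with the unit circle, ordered so that
`|u-a| < |u-b|` (equivalently `|v-b| < |v-a|`). For `a = b` the defining set
is empty and `sSup ∅ = 0`. -/
noncomputable def hilbertDist (a b : ℂ) : ℝ :=
  sSup { d : ℝ | ∃ u v : ℂ, ‖u‖ = 1 ∧ ‖v‖ = 1 ∧
    u ∈ lineThrough a b ∧ v ∈ lineThrough a b ∧
    dist u a < dist u b ∧ dist v b < dist v a ∧
    d = Real.log ((dist u b * dist a v) / (dist u a * dist b v)) }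

/-- The hyperbolic (Poincaré) metric of the unit disk, defined by
`sinh (ρ(a,b)/2) = |a-b| / √((1-|a|²)(1-|b|²))`. -/
noncomputable def rhoDist (a b : ℂ) : ℝ :=
  2 * Real.arsinh (‖a - b‖ /
    Real.sqrt ((1 - ‖a‖ ^ 2) * (1 - ‖b‖ ^ 2)))

/-- The visual angle metric of the unit disk:
`v(a,b) = sup {∠(a,z,b) : z ∈ ∂𝔹²}`. -/
noncomputable def visualAngle (a b : ℂ) : ℝ :=
  sSup { α : ℝ | ∃ z : ℂ, ‖z‖ = 1 ∧ α = EuclideanGeometry.angle a z b }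

/-- Euclidean distance from the origin to the line through `a` and `b`. -/
noncomputable def distToLine (a b : ℂ) : ℝ := Metric.infDist 0 (lineThrough a b)

/-- The Hilbert disk `B_h(z₀, t)`. -/
noncomputable def hilbertBall (z₀ : ℂ) (t : ℝ) : Set ℂ :=
  {z : ℂ | ‖z‖ < 1 ∧ hilbertDist z₀ z < t}

/-- The hyperbolic disk `B_ρ(z₀, t)`. -/
noncomputable def rhoBall (z₀ : ℂ) (t : ℝ) : Set ℂ :=
  {z : ℂ | ‖z‖ < 1 ∧ rhoDist z₀ z < t}

open Metric

lemma tanh_log_quarter (X Y : ℝ) (hX : 0 < X) (hY : 0 < Y) :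
    Real.tanh (Real.log (X / Y) / 4) = (Real.sqrt X - Real.sqrt Y) / (Real.sqrt X + Real.sqrt Y) := by
  have hXY : 0 < X / Y := div_pos hX hY
  set E : ℝ := (X / Y) ^ ((4:ℝ)⁻¹) with hEdef
  have hEpos : 0 < E := Real.rpow_pos_of_pos hXY _
  have hE : Real.exp (Real.log (X / Y) / 4) = E := by
    rw [hEdef, Real.rpow_def_of_pos hXY]; ring_nf
  have hx : 0 < Real.sqrt X := Real.sqrt_pos.2 hX
  have hy : 0 < Real.sqrt Y := Real.sqrt_pos.2 hY
  have hE2 : E * E * Real.sqrt Y = Real.sqrt X := by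
    rw [hEdef, ← Real.rpow_add hXY, show (4:ℝ)⁻¹ + 4⁻¹ = 1/2 by norm_num,
      ← Real.sqrt_eq_rpow, Real.sqrt_div hX.le]
    field_simp
  rw [Real.tanh_eq_sinh_div_cosh, Real.sinh_eq, Real.cosh_eq, Real.exp_neg, hE]
  rw [div_div_div_cancel_right₀]
  field_simp
  · linear_combination 2 * hE2
  · norm_num

lemma core_A (x y d L : ℝ) (hy : 0 < y) (hxy : y < x) (hd : 0 < d)
    (hdL : x ^ 2 - y ^ 2 = d * L) (hL2 : L ≤ 2) :
    (x - y) / (x + y) ≤ d / (Real.sqrt (d ^ 2 + (x * y) ^ 2) + x * y) := by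
  have hx : 0 < x := hy.trans hxy
  have hL : 0 < L := by nlinarith
  set s : ℝ := Real.sqrt (d ^ 2 + (x * y) ^ 2) with hsdef
  have hs2 : s ^ 2 = d ^ 2 + (x * y) ^ 2 := Real.sq_sqrt (by positivity)
  have hs0 : 0 ≤ s := Real.sqrt_nonneg _
  have hden : 0 < s + x * y := by positivity
  rw [div_le_div_iff₀ (by positivity) hden]
  -- goal : (x - y) * (s + x * y) ≤ d * (x + y)
  have hTL : (d * (x + y) - (x - y) * (x * y)) * L
      = (x - y) * ((x + y) ^ 2 - L * (x * y)) := by linear_combination (-(x + y)) * hdL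
  have h5 : 0 ≤ (x - y) * ((x + y) ^ 2 - L * (x * y)) := by
    apply mul_nonneg (by linarith)
    nlinarith [mul_pos hx hy, sq_nonneg (x - y)]
  have hT : 0 ≤ d * (x + y) - (x - y) * (x * y) := by nlinarith [hTL, h5, hL]
  have hcert : ((d * (x + y) - (x - y) * (x * y)) ^ 2 - ((x - y) * s) ^ 2) * L ^ 2
      = 2 * (2 - L) * (x * y) * (x + y) ^ 2 * (x - y) ^ 2 := by
    linear_combination (-((x - y) ^ 2 * L ^ 2)) * hs2
      + (-(2 * (x * y) * (2 - L) * (x ^ 2 - y ^ 2)) - 4 * (x * y) * d * L) * hdL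
  have hLL : (0:ℝ) < L ^ 2 := by positivity
  have hR : (0:ℝ) ≤ 2 * (2 - L) * (x * y) * (x + y) ^ 2 * (x - y) ^ 2 := by
    have h2L : (0:ℝ) ≤ 2 - L := by linarith
    have := mul_pos hx hy
    positivity
  have hsq : ((x - y) * s) ^ 2 ≤ (d * (x + y) - (x - y) * (x * y)) ^ 2 := by
    nlinarith [hcert, hLL, hR]
  have hkey : (x - y) * s ≤ d * (x + y) - (x - y) * (x * y) := by
    nlinarith [hsq, hT, mul_nonneg (sub_nonneg.2 hxy.le) hs0]
  nlinarith [hkey]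

lemma core_B (x y d L : ℝ) (hy : 0 < y) (hxy : y < x) (hd : 0 < d)
    (hdL : x ^ 2 - y ^ 2 = d * L) (hL2 : L ≤ 2) :
    d / (Real.sqrt (d ^ 2 + (x * y) ^ 2) + x * y) ≤ (2 / L) * ((x - y) / (x + y)) := by
  have hx : 0 < x := hy.trans hxy
  have hL : 0 < L := by nlinarith
  set s : ℝ := Real.sqrt (d ^ 2 + (x * y) ^ 2) with hsdef
  have hs2 : s ^ 2 = d ^ 2 + (x * y) ^ 2 := Real.sq_sqrt (by positivity)
  have hs0 : 0 ≤ s := Real.sqrt_nonneg _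
  have hden : 0 < s + x * y := by positivity
  rw [div_mul_div_comm, div_le_div_iff₀ hden (by positivity)]
  -- goal: d * (L * (x + y)) ≤ 2 * (x - y) * (s + x * y)
  have hsq2 : (x ^ 2 + y ^ 2) ^ 2 ≤ (2 * s) ^ 2 := by
    nlinarith [hs2, mul_nonneg (mul_nonneg (sq_nonneg d) (by linarith : (0:ℝ) ≤ 2 - L))
      (by linarith : (0:ℝ) ≤ 2 + L)]
  have hkey : x ^ 2 + y ^ 2 ≤ 2 * s := by
    nlinarith [hsq2, hs0, sq_nonneg (x ^ 2 + y ^ 2 + 2 * s), mul_pos hx hy]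
  nlinarith [mul_nonneg (sub_nonneg.2 hxy.le) (sub_nonneg.2 hkey)]

lemma r_mono (u v : ℝ) (hu : 0 ≤ u) (huv : u ≤ v) :
    u / (1 + Real.sqrt (1 + u ^ 2)) ≤ v / (1 + Real.sqrt (1 + v ^ 2)) := by
  have hv : 0 ≤ v := hu.trans huv
  have hsu : Real.sqrt (1 + u ^ 2) ^ 2 = 1 + u ^ 2 := Real.sq_sqrt (by positivity)
  have hsv : Real.sqrt (1 + v ^ 2) ^ 2 = 1 + v ^ 2 := Real.sq_sqrt (by positivity)
  have hsu0 : 0 ≤ Real.sqrt (1 + u ^ 2) := Real.sqrt_nonneg _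
  have hsv0 : 0 ≤ Real.sqrt (1 + v ^ 2) := Real.sqrt_nonneg _
  have h1sq : (u * Real.sqrt (1 + v ^ 2)) ^ 2 ≤ (v * Real.sqrt (1 + u ^ 2)) ^ 2 := by
    rw [mul_pow, mul_pow, hsu, hsv]; nlinarith
  have h1 : u * Real.sqrt (1 + v ^ 2) ≤ v * Real.sqrt (1 + u ^ 2) := by
    nlinarith [h1sq, mul_nonneg hu hsv0, mul_nonneg hv hsu0]
  rw [div_le_div_iff₀ (by positivity) (by positivity)]
  nlinarith [h1]

lemma normSq_line (a w : ℂ) (t : ℝ) :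
    Complex.normSq (a + (t : ℂ) * w)
      = Complex.normSq w * t ^ 2 + 2 * ((conj a) * w).re * t + Complex.normSq a := by
  simp [Complex.normSq_apply, Complex.add_re, Complex.add_im, Complex.mul_re, Complex.mul_im,
    Complex.conj_re, Complex.conj_im, Complex.ofReal_re, Complex.ofReal_im]
  ring

/-- The line through distinct points of the disk meets the circle in exactly the
parameters `t₁ < 0` and `t₂ > 1`, with the quadratic factorization. -/
lemma exists_roots (a b : ℂ) (ha : ‖a‖ < 1) (hb : ‖b‖ < 1) (hab : a ≠ b) :
    ∃ t₁ t₂ : ℝ, t₁ < 0 ∧ 1 < t₂ ∧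
      ∀ t : ℝ, Complex.normSq (a + (t : ℂ) * (b - a)) - 1
        = Complex.normSq (b - a) * ((t - t₁) * (t - t₂)) := by
  set w : ℂ := b - a with hw
  have hw0 : w ≠ 0 := sub_ne_zero.2 (Ne.symm hab)
  set c2 : ℝ := Complex.normSq w with hc2
  set c1 : ℝ := 2 * ((conj a) * w).re with hc1
  set c0 : ℝ := Complex.normSq a - 1 with hc0
  have hc2pos : 0 < c2 := Complex.normSq_pos.2 hw0
  have hc0neg : c0 < 0 := by
    have : Complex.normSq a < 1 := by
      rw [← Complex.sq_norm]; nlinarith [norm_nonneg a]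
    simp [hc0]; linarith
  have hg1 : c2 + c1 + c0 = Complex.normSq b - 1 := by
    have := normSq_line a w 1
    simp only [Complex.ofReal_one, one_mul, one_pow, mul_one] at this
    rw [hc2, hc1, hc0, hw]
    rw [show a + (b - a) = b by ring] at this
    linarith
  have hg1neg : c2 + c1 + c0 < 0 := by
    rw [hg1]
    have : Complex.normSq b < 1 := by
      rw [← Complex.sq_norm]; nlinarith [norm_nonneg b]
    linarith
  set disc : ℝ := c1 ^ 2 - 4 * c2 * c0 with hdisc
  have hdiscpos : c1 ^ 2 < disc := by
    rw [hdisc]; nlinarith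
  have hdisc0 : 0 ≤ disc := by nlinarith [sq_nonneg c1]
  set r : ℝ := Real.sqrt disc with hr
  have hr2 : r ^ 2 = disc := Real.sq_sqrt hdisc0
  have hrc1 : |c1| < r := by
    have : |c1| = Real.sqrt (c1 ^ 2) := (Real.sqrt_sq_eq_abs c1).symm
    rw [this, hr]
    exact Real.sqrt_lt_sqrt (sq_nonneg c1) hdiscpos
  refine ⟨(-c1 - r) / (2 * c2), (-c1 + r) / (2 * c2), ?_, ?_, ?_⟩
  · apply div_neg_of_neg_of_pos _ (by linarith)
    have := abs_le.1 hrc1.le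
    linarith [le_abs_self c1, neg_abs_le c1, hrc1]
  · rw [lt_div_iff₀ (by linarith)]
    -- r > 2 c2 + c1
    nlinarith [hr2, Real.sqrt_nonneg disc, hg1neg, hc2pos]
  · intro t
    rw [normSq_line a w t, ← hc2, ← hc1]
    have h1 : c0 = Complex.normSq a - 1 := hc0
    field_simp
    nlinarith [hr2]

noncomputable def mob (w z : ℂ) : ℂ := (w - z) / (1 - conj w * z)

lemma mob_normSq_identity (w z : ℂ) :
    Complex.normSq (1 - conj w * z) - Complex.normSq (w - z)
      = (1 - Complex.normSq w) * (1 - Complex.normSq z) := by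
  simp [Complex.normSq_apply, Complex.sub_re, Complex.sub_im, Complex.mul_re, Complex.mul_im,
    Complex.one_re, Complex.one_im, Complex.conj_re, Complex.conj_im]
  ring

lemma mob_den_ne (w z : ℂ) (hw : ‖w‖ < 1) (hz : ‖z‖ < 1) :
    (1 : ℂ) - conj w * z ≠ 0 := by
  intro h
  have h2 : (1 : ℂ) = conj w * z := by linear_combination h
  have : (1 : ℝ) = ‖conj w * z‖ := by rw [← h2]; simp
  rw [norm_mul, Complex.norm_conj] at this
  nlinarith [norm_nonneg w, norm_nonneg z]

lemma mob_maps (w z : ℂ) (hw : ‖w‖ < 1) (hz : ‖z‖ < 1) :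
    ‖mob w z‖ < 1 := by
  have hden := mob_den_ne w z hw hz
  have hdenpos : 0 < Complex.normSq (1 - conj w * z) := Complex.normSq_pos.2 hden
  rw [mob, norm_div, div_lt_one (norm_pos_iff.mpr hden)]
  · have h1 : Complex.normSq (w - z) < Complex.normSq (1 - conj w * z) := by
      have := mob_normSq_identity w z
      have hw2 : Complex.normSq w < 1 := by rw [← Complex.sq_norm]; nlinarith [norm_nonneg w]
      have hz2 : Complex.normSq z < 1 := by rw [← Complex.sq_norm]; nlinarith [norm_nonneg z]
      nlinarith
    have := Real.sqrt_lt_sqrt (Complex.normSq_nonneg _) h1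
    rwa [← Complex.norm_def, ← Complex.norm_def] at this

lemma mob_self (w : ℂ) : mob w w = 0 := by simp [mob]

lemma mob_invol (w z : ℂ) (hw : ‖w‖ < 1) (hz : ‖z‖ < 1) :
    mob w (mob w z) = z := by
  have h1 : (1 : ℂ) - conj w * z ≠ 0 := mob_den_ne w z hw hz
  have h2 : (1 : ℂ) - conj w * w ≠ 0 := mob_den_ne w w hw hw
  rw [mob, mob]
  rw [div_eq_iff]
  · have h1' : (1 : ℂ) - z * conj w ≠ 0 := by rwa [mul_comm]
    field_simp
    ring
  · -- 1 - conj w * ((w - z)/(1 - conj w * z)) ≠ 0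
    rw [sub_ne_zero]
    intro h
    apply h2
    field_simp at h
    linear_combination h

lemma mob_differentiableOn (w : ℂ) (hw : ‖w‖ < 1) :
    DifferentiableOn ℂ (mob w) (ball 0 1) := by
  apply DifferentiableOn.div
  · exact (differentiable_const w).differentiableOn.sub differentiable_id.differentiableOn
  · exact (differentiable_const (1:ℂ)).differentiableOn.sub
      ((differentiable_const (conj w)).mul differentiable_id).differentiableOn
  · intro z hz
    exact mob_den_ne w z hw (by simpa [Complex.norm_def] using mem_ball_zero_iff.1 hz)

lemma mob_mapsTo (w : ℂ) (hw : ‖w‖ < 1) :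
    Set.MapsTo (mob w) (ball 0 1) (ball 0 1) := by
  intro z hz
  rw [mem_ball_zero_iff] at hz ⊢
  exact mob_maps w z hw hz

/-- Schwarz–Pick. -/
lemma schwarz_pick {f : ℂ → ℂ} (hf : DifferentiableOn ℂ f (ball 0 1))
    (hmaps : Set.MapsTo f (ball 0 1) (ball 0 1)) {a b : ℂ}
    (ha : ‖a‖ < 1) (hb : ‖b‖ < 1) :
    ‖mob (f a) (f b)‖ ≤ ‖mob a b‖ := by
  have haB : a ∈ ball (0:ℂ) 1 := mem_ball_zero_iff.2 ha
  have hbB : b ∈ ball (0:ℂ) 1 := mem_ball_zero_iff.2 hb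
  have hfa : ‖f a‖ < 1 := mem_ball_zero_iff.1 (hmaps haB)
  set g : ℂ → ℂ := fun z => mob (f a) (f (mob a z)) with hg
  have hgd : DifferentiableOn ℂ g (ball 0 1) := by
    apply DifferentiableOn.comp (mob_differentiableOn (f a) hfa)
      (hf.comp (mob_differentiableOn a ha) (mob_mapsTo a ha))
    exact (hmaps.comp (mob_mapsTo a ha))
  have hgm : Set.MapsTo g (ball 0 1) (ball 0 1) :=
    (mob_mapsTo (f a) hfa).comp (hmaps.comp (mob_mapsTo a ha))
  have hg0 : g 0 = 0 := by
    have : mob a 0 = a := by simp [mob]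
    rw [hg]; simp only [this, mob_self]
  have hzb : ‖mob a b‖ < 1 := mob_maps a b ha hb
  have := Complex.norm_le_norm_of_mapsTo_ball hgd (hgm.mono_right ball_subset_closedBall) hg0 hzb
  simp only [hg, mob_invol a b ha hb] at this
  exact this

lemma sigma_mono (m1 N1 m2 N2 : ℝ) (hm1 : 0 ≤ m1) (hN1 : 0 < N1) (hN2 : 0 < N2)
    (h1 : m1 < N1) (h2 : m2 < N2) (hm2 : 0 ≤ m2) (h : m1 / N1 ≤ m2 / N2) :
    m1 / Real.sqrt (N1 ^ 2 - m1 ^ 2) ≤ m2 / Real.sqrt (N2 ^ 2 - m2 ^ 2) := by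
  have hd1 : 0 < N1 ^ 2 - m1 ^ 2 := by nlinarith
  have hd2 : 0 < N2 ^ 2 - m2 ^ 2 := by nlinarith
  have hs1 : 0 < Real.sqrt (N1 ^ 2 - m1 ^ 2) := Real.sqrt_pos.2 hd1
  have hs2 : 0 < Real.sqrt (N2 ^ 2 - m2 ^ 2) := Real.sqrt_pos.2 hd2
  have hsq1 : Real.sqrt (N1 ^ 2 - m1 ^ 2) ^ 2 = N1 ^ 2 - m1 ^ 2 := Real.sq_sqrt hd1.le
  have hsq2 : Real.sqrt (N2 ^ 2 - m2 ^ 2) ^ 2 = N2 ^ 2 - m2 ^ 2 := Real.sq_sqrt hd2.le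
  have hcross : m1 * N2 ≤ m2 * N1 := by
    rw [div_le_div_iff₀ hN1 hN2] at h; linarith
  rw [div_le_div_iff₀ hs1 hs2]
  have hsqcmp : (m1 * Real.sqrt (N2 ^ 2 - m2 ^ 2)) ^ 2 ≤ (m2 * Real.sqrt (N1 ^ 2 - m1 ^ 2)) ^ 2 := by
    rw [mul_pow, mul_pow, hsq1, hsq2]
    nlinarith [mul_nonneg (sub_nonneg.2 hcross)
      (add_nonneg (mul_nonneg hm2 hN1.le) (mul_nonneg hm1 hN2.le)), sq_nonneg m1, sq_nonneg m2,
      mul_nonneg hm1 hm2]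
  nlinarith [hsqcmp, mul_nonneg hm1 hs2.le, mul_nonneg hm2 hs1.le]

lemma abs_sq_identity (u v : ℂ) :
    ‖1 - conj u * v‖ ^ 2 - ‖u - v‖ ^ 2
      = (1 - ‖u‖ ^ 2) * (1 - ‖v‖ ^ 2) := by
  rw [Complex.sq_norm, Complex.sq_norm, Complex.sq_norm, Complex.sq_norm]
  exact mob_normSq_identity u v

lemma schwarz_pick_sigma {f : ℂ → ℂ} (hf : DifferentiableOn ℂ f (ball 0 1))
    (hmaps : Set.MapsTo f (ball 0 1) (ball 0 1)) {a b : ℂ}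
    (ha : ‖a‖ < 1) (hb : ‖b‖ < 1) :
    ‖f a - f b‖ /
        Real.sqrt ((1 - ‖f a‖ ^ 2) * (1 - ‖f b‖ ^ 2))
      ≤ ‖a - b‖ /
        Real.sqrt ((1 - ‖a‖ ^ 2) * (1 - ‖b‖ ^ 2)) := by
  have hfa : ‖f a‖ < 1 := mem_ball_zero_iff.1 (hmaps (mem_ball_zero_iff.2 ha))
  have hfb : ‖f b‖ < 1 := mem_ball_zero_iff.1 (hmaps (mem_ball_zero_iff.2 hb))
  have hsp := schwarz_pick hf hmaps ha hb
  have key : ∀ u v : ℂ, ‖u‖ < 1 → ‖v‖ < 1 →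
      (Real.sqrt ((1 - ‖u‖ ^ 2) * (1 - ‖v‖ ^ 2))
        = Real.sqrt (‖1 - conj u * v‖ ^ 2 - ‖u - v‖ ^ 2))
      ∧ ‖u - v‖ < ‖1 - conj u * v‖ := by
    intro u v hu hv
    have hid := abs_sq_identity u v
    have hpos : 0 < (1 - ‖u‖ ^ 2) * (1 - ‖v‖ ^ 2) := by
      apply mul_pos <;> nlinarith [norm_nonneg u, norm_nonneg v]
    constructor
    · rw [← hid]
    · nlinarith [norm_nonneg (u - v), norm_nonneg (1 - conj u * v), hid]
  obtain ⟨he1, hl1⟩ := key (f a) (f b) hfa hfb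
  obtain ⟨he2, hl2⟩ := key a b ha hb
  rw [he1, he2]
  apply sigma_mono _ _ _ _ (norm_nonneg _) (norm_pos_iff.mpr (mob_den_ne _ _ hfa hfb))
    (norm_pos_iff.mpr (mob_den_ne _ _ ha hb)) hl1 hl2 (norm_nonneg _)
  rw [← norm_div, ← norm_div]
  exact hsp





lemma dist_line (a w : ℂ) (s t : ℝ) :
    dist (a + (s : ℂ) * w) (a + (t : ℂ) * w) = |s - t| * ‖w‖ := by
  rw [Complex.dist_eq, show a + (s : ℂ) * w - (a + (t : ℂ) * w) = ((s - t : ℝ) : ℂ) * w by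
    push_cast; ring, norm_mul, Complex.norm_real, Real.norm_eq_abs]

lemma abs_one_iff_of_fac {a w : ℂ} {t₁ t₂ : ℝ} (hw : w ≠ 0)
    (hfac : ∀ t : ℝ, Complex.normSq (a + (t : ℂ) * w) - 1
      = Complex.normSq w * ((t - t₁) * (t - t₂))) (t : ℝ) :
    ‖a + (t : ℂ) * w‖ = 1 ↔ (t = t₁ ∨ t = t₂) := by
  have hc2 : 0 < Complex.normSq w := Complex.normSq_pos.2 hw
  constructor
  · intro h
    have h1 : Complex.normSq (a + (t : ℂ) * w) = 1 := by
      rw [← Complex.sq_norm, h]; norm_num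
    have h2 := hfac t
    rw [h1] at h2
    have h3 : Complex.normSq w * ((t - t₁) * (t - t₂)) = 0 := by linarith
    rcases mul_eq_zero.1 h3 with h | h
    · exact absurd h hc2.ne'
    rcases mul_eq_zero.1 h with h | h
    · left; linarith
    · right; linarith
  · intro h
    have h1 : Complex.normSq (a + (t : ℂ) * w) = 1 := by
      have h2 := hfac t
      rcases h with h | h <;> subst h <;> simp at h2 <;> linarith
    rw [← Real.sqrt_one, ← h1, ← Complex.norm_def]

lemma hilbertDist_eval (a b : ℂ) (hab : a ≠ b) {t₁ t₂ : ℝ} (ht₁ : t₁ < 0) (ht₂ : 1 < t₂)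
    (hfac : ∀ t : ℝ, Complex.normSq (a + (t : ℂ) * (b - a)) - 1
      = Complex.normSq (b - a) * ((t - t₁) * (t - t₂))) :
    hilbertDist a b = Real.log (((1 - t₁) * t₂) / ((-t₁) * (t₂ - 1))) := by
  set w : ℂ := b - a with hw
  have hw0 : w ≠ 0 := sub_ne_zero.2 (Ne.symm hab)
  set D : ℝ := ‖w‖ with hD
  have hD0 : 0 < D := norm_pos_iff.mpr hw0
  have habs := abs_one_iff_of_fac hw0 hfac
  have key : ∀ t : ℝ, a + (t : ℂ) * w ∈ lineThrough a b := fun t => ⟨t, rfl⟩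
  have hda : ∀ t : ℝ, dist (a + (t : ℂ) * w) a = |t| * D := by
    intro t
    have := dist_line a w t 0
    simpa [hD] using this
  have hdb : ∀ t : ℝ, dist (a + (t : ℂ) * w) b = |t - 1| * D := by
    intro t
    have := dist_line a w t 1
    rw [show a + ((1:ℝ) : ℂ) * w = b by rw [hw]; push_cast; ring] at this
    exact this
  have habs1 : |t₁| = -t₁ := abs_of_neg ht₁
  have habs2 : |t₁ - 1| = -(t₁ - 1) := abs_of_neg (by linarith)
  have habs3 : |t₂| = t₂ := abs_of_pos (by linarith)
  have habs4 : |t₂ - 1| = t₂ - 1 := abs_of_pos (by linarith)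
  have hval : Real.log ((|t₁ - 1| * D * (|t₂| * D)) / ((|t₁| * D) * (|t₂ - 1| * D)))
      = Real.log (((1 - t₁) * t₂) / ((-t₁) * (t₂ - 1))) := by
    rw [habs1, habs2, habs3, habs4]
    congr 1
    rw [div_eq_div_iff (ne_of_gt (mul_pos (mul_pos (neg_pos.2 ht₁) hD0) (mul_pos (sub_pos.2 ht₂) hD0)))
      (ne_of_gt (mul_pos (neg_pos.2 ht₁) (sub_pos.2 ht₂)))]
    ring
  have hset : { d : ℝ | ∃ u v : ℂ, ‖u‖ = 1 ∧ ‖v‖ = 1 ∧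
      u ∈ lineThrough a b ∧ v ∈ lineThrough a b ∧
      dist u a < dist u b ∧ dist v b < dist v a ∧
      d = Real.log ((dist u b * dist a v) / (dist u a * dist b v)) }
      = {Real.log (((1 - t₁) * t₂) / ((-t₁) * (t₂ - 1)))} := by
    apply Set.eq_singleton_iff_unique_mem.2
    constructor
    · refine ⟨a + (t₁ : ℂ) * w, a + (t₂ : ℂ) * w, (habs t₁).2 (Or.inl rfl),
        (habs t₂).2 (Or.inr rfl), key t₁, key t₂, ?_, ?_, ?_⟩
      · rw [hda t₁, hdb t₁, habs1, habs2]; nlinarith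
      · rw [hdb t₂, hda t₂, habs3, habs4]; nlinarith
      · rw [dist_comm a (a + (t₂ : ℂ) * w), dist_comm b (a + (t₂ : ℂ) * w),
          hda t₁, hdb t₁, hda t₂, hdb t₂, hval]
    · rintro d ⟨u, v, hu1, hv1, ⟨s, hu⟩, ⟨t, hv⟩, huab, hvab, rfl⟩
      rw [← hw] at hu hv
      subst hu; subst hv
      have hs : s = t₁ := by
        rcases (habs s).1 hu1 with h | h
        · exact h
        · exfalso
          rw [hda s, hdb s, h, habs3, habs4] at huab
          nlinarith
      have ht : t = t₂ := by
        rcases (habs t).1 hv1 with h | h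
        · exfalso
          rw [hdb t, hda t, h, habs1, habs2] at hvab
          nlinarith
        · exact h
      rw [hs, ht, dist_comm a (a + (t₂ : ℂ) * w), dist_comm b (a + (t₂ : ℂ) * w),
        hda t₁, hdb t₁, hda t₂, hdb t₂, hval]
  rw [hilbertDist, hset, csSup_singleton]



lemma distToLine_eval (a b : ℂ) (hab : a ≠ b) {t₁ t₂ : ℝ} (ht₁ : t₁ < 0) (ht₂ : 1 < t₂)
    (hfac : ∀ t : ℝ, Complex.normSq (a + (t : ℂ) * (b - a)) - 1
      = Complex.normSq (b - a) * ((t - t₁) * (t - t₂))) :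
    distToLine a b
      = Real.sqrt (1 - Complex.normSq (b - a) * (t₂ - t₁) ^ 2 / 4) := by
  set w : ℂ := b - a with hw
  have hw0 : w ≠ 0 := sub_ne_zero.2 (Ne.symm hab)
  have hc2 : 0 < Complex.normSq w := Complex.normSq_pos.2 hw0
  set M2 : ℝ := 1 - Complex.normSq w * (t₂ - t₁) ^ 2 / 4 with hM2
  have hmid : Complex.normSq (a + (((t₁ + t₂) / 2 : ℝ) : ℂ) * w) = M2 := by
    have := hfac ((t₁ + t₂) / 2)
    rw [hM2]; nlinarith [this]
  have hM2nn : 0 ≤ M2 := hmid ▸ Complex.normSq_nonneg _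
  have hlb : ∀ z ∈ lineThrough a b, Real.sqrt M2 ≤ dist 0 z := by
    rintro z ⟨t, rfl⟩
    rw [dist_comm, Complex.dist_eq, sub_zero, Complex.norm_def, ← hw]
    apply Real.sqrt_le_sqrt
    rw [← hmid]
    nlinarith [hfac t, hfac ((t₁ + t₂) / 2), mul_nonneg hc2.le (sq_nonneg (t - (t₁ + t₂) / 2))]
  apply le_antisymm
  · have hmem : a + (((t₁ + t₂) / 2 : ℝ) : ℂ) * w ∈ lineThrough a b := ⟨_, rfl⟩
    calc distToLine a b ≤ dist 0 (a + (((t₁ + t₂) / 2 : ℝ) : ℂ) * w) :=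
          Metric.infDist_le_dist_of_mem hmem
      _ = Real.sqrt M2 := by
          rw [dist_comm, Complex.dist_eq, sub_zero, Complex.norm_def, hmid]
  · rw [distToLine, Metric.infDist_eq_iInf]
    have hne : Nonempty (lineThrough a b) := ⟨⟨a, 0, by simp⟩⟩
    exact le_ciInf fun z => hlb z z.2


lemma conv_r (d w : ℝ) (hd : 0 < d) (hw : 0 < w) :
    d / (Real.sqrt (d ^ 2 + w ^ 2) + w) = (d / w) / (1 + Real.sqrt (1 + (d / w) ^ 2)) := by
  have h1 : 1 + (d / w) ^ 2 = (d ^ 2 + w ^ 2) / w ^ 2 := by field_simp; ring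
  have hs0 : 0 ≤ Real.sqrt (d ^ 2 + w ^ 2) := Real.sqrt_nonneg _
  rw [h1, Real.sqrt_div (by positivity) (w ^ 2), Real.sqrt_sq hw.le]
  have h2 : 1 + Real.sqrt (d ^ 2 + w ^ 2) / w = (w + Real.sqrt (d ^ 2 + w ^ 2)) / w := by
    field_simp
  rw [h2, div_div_div_cancel_right₀, add_comm]
  exact hw.ne'

set_option maxHeartbeats 1000000 in
lemma pair_main (a b : ℂ) (ha : ‖a‖ < 1) (hb : ‖b‖ < 1) (hab : a ≠ b) :
    Real.tanh (hilbertDist a b / 4)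
        ≤ (‖a - b‖ / Real.sqrt ((1 - ‖a‖ ^ 2) * (1 - ‖b‖ ^ 2))) /
          (1 + Real.sqrt (1 + (‖a - b‖ /
            Real.sqrt ((1 - ‖a‖ ^ 2) * (1 - ‖b‖ ^ 2))) ^ 2))
      ∧ (‖a - b‖ / Real.sqrt ((1 - ‖a‖ ^ 2) * (1 - ‖b‖ ^ 2))) /
          (1 + Real.sqrt (1 + (‖a - b‖ /
            Real.sqrt ((1 - ‖a‖ ^ 2) * (1 - ‖b‖ ^ 2))) ^ 2))
        ≤ (1 / Real.sqrt (1 - distToLine a b ^ 2)) * Real.tanh (hilbertDist a b / 4) := by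
  obtain ⟨t₁, t₂, ht₁, ht₂, hfac⟩ := exists_roots a b ha hb hab
  set w : ℂ := b - a with hw
  have hw0 : w ≠ 0 := sub_ne_zero.2 (Ne.symm hab)
  set D : ℝ := ‖w‖ with hD
  have hD0 : 0 < D := norm_pos_iff.mpr hw0
  have hc2 : Complex.normSq w = D ^ 2 := (Complex.sq_norm w).symm
  set X : ℝ := (1 - t₁) * t₂ with hX
  set Y : ℝ := (-t₁) * (t₂ - 1) with hY
  have hXpos : 0 < X := by rw [hX]; nlinarith
  have hYpos : 0 < Y := by rw [hY]; nlinarith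
  have hXY : Y < X := by rw [hX, hY]; nlinarith
  set x : ℝ := Real.sqrt X with hxdef
  set y : ℝ := Real.sqrt Y with hydef
  have hx2 : x ^ 2 = X := Real.sq_sqrt hXpos.le
  have hy2 : y ^ 2 = Y := Real.sq_sqrt hYpos.le
  have hy0 : 0 < y := Real.sqrt_pos.2 hYpos
  have hxy : y < x := Real.sqrt_lt_sqrt hYpos.le hXY
  have hx0 : 0 < x := hy0.trans hxy
  set L : ℝ := (t₂ - t₁) * D with hL
  have hLpos : 0 < L := by rw [hL]; nlinarith
  have hu1 : ‖a + (t₁ : ℂ) * w‖ = 1 := (abs_one_iff_of_fac hw0 hfac t₁).2 (Or.inl rfl)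
  have hv1 : ‖a + (t₂ : ℂ) * w‖ = 1 := (abs_one_iff_of_fac hw0 hfac t₂).2 (Or.inr rfl)
  have hL2 : L ≤ 2 := by
    have h1 : ‖(a + (t₁ : ℂ) * w) - (a + (t₂ : ℂ) * w)‖ ≤ 2 := by
      calc ‖(a + (t₁ : ℂ) * w) - (a + (t₂ : ℂ) * w)‖
          ≤ ‖a + (t₁ : ℂ) * w‖ + ‖a + (t₂ : ℂ) * w‖ := by
            exact norm_sub_le _ _
        _ = 2 := by rw [hu1, hv1]; norm_num
    have h2 : (a + (t₁ : ℂ) * w) - (a + (t₂ : ℂ) * w) = ((t₁ - t₂ : ℝ) : ℂ) * w := by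
      push_cast; ring
    rw [h2, norm_mul, Complex.norm_real, Real.norm_eq_abs, abs_of_neg (by linarith : t₁ - t₂ < 0)] at h1
    rw [hL]
    have : -(t₁ - t₂) * D = (t₂ - t₁) * D := by ring
    rw [← this]
    exact h1
  set dcore : ℝ := 1 / D with hdcore
  have hdcore0 : 0 < dcore := by rw [hdcore]; positivity
  have hdL : x ^ 2 - y ^ 2 = dcore * L := by
    rw [hx2, hy2, hX, hY, hdcore, hL]; field_simp; ring
  have htanh : Real.tanh (hilbertDist a b / 4) = (x - y) / (x + y) := by
    rw [hilbertDist_eval a b hab ht₁ ht₂ hfac]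
    exact tanh_log_quarter X Y hXpos hYpos
  have hA : 1 - ‖a‖ ^ 2 = (-t₁) * t₂ * D ^ 2 := by
    have h0 := hfac 0
    simp only [Complex.ofReal_zero, zero_mul, add_zero] at h0
    rw [Complex.sq_norm, ← hc2]
    linear_combination -h0
  have hB : 1 - ‖b‖ ^ 2 = (1 - t₁) * (t₂ - 1) * D ^ 2 := by
    have h1 := hfac 1
    simp only [Complex.ofReal_one, one_mul] at h1
    rw [show a + w = b by rw [hw]; ring] at h1
    rw [Complex.sq_norm, ← hc2]
    linear_combination -h1
  have hABeq : (1 - ‖a‖ ^ 2) * (1 - ‖b‖ ^ 2) = (x * y * D ^ 2) ^ 2 := by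
    rw [hA, hB]
    have h3 : (x * y * D ^ 2) ^ 2 = X * Y * (D ^ 2) ^ 2 := by
      rw [mul_pow, mul_pow, hx2, hy2]
    rw [h3, hX, hY]; ring
  have hsAB : Real.sqrt ((1 - ‖a‖ ^ 2) * (1 - ‖b‖ ^ 2)) = x * y * D ^ 2 := by
    rw [hABeq]; exact Real.sqrt_sq (by positivity)
  have hab_abs : ‖a - b‖ = D := by
    rw [norm_sub_rev]
  have hsigma : ‖a - b‖ /
      Real.sqrt ((1 - ‖a‖ ^ 2) * (1 - ‖b‖ ^ 2)) = dcore / (x * y) := by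
    rw [hsAB, hab_abs, hdcore]
    field_simp
  -- the distance to the line
  have hm := distToLine_eval a b hab ht₁ ht₂ hfac
  have hM2L : 1 - Complex.normSq (b - a) * (t₂ - t₁) ^ 2 / 4 = 1 - (L / 2) ^ 2 := by
    rw [← hw, hc2, hL]; ring
  have hM2nn : 0 ≤ 1 - Complex.normSq (b - a) * (t₂ - t₁) ^ 2 / 4 := by
    rw [hM2L]; nlinarith
  have h1m : 1 - distToLine a b ^ 2 = (L / 2) ^ 2 := by
    rw [hm, Real.sq_sqrt hM2nn, hM2L]; ring
  have hsqm : Real.sqrt (1 - distToLine a b ^ 2) = L / 2 := by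
    rw [h1m]; exact Real.sqrt_sq (by positivity)
  have hfrac : (1 : ℝ) / Real.sqrt (1 - distToLine a b ^ 2) = 2 / L := by
    rw [hsqm]; field_simp
  rw [htanh, hsigma, hfrac]
  have hconv := conv_r dcore (x * y) hdcore0 (by positivity)
  constructor
  · rw [← hconv]
    exact core_A x y dcore L hy0 hxy hdcore0 hdL hL2
  · rw [← hconv]
    exact core_B x y dcore L hy0 hxy hdcore0 hdL hL2

/-- Distortion of the Hilbert metric under a holomorphic self-map of the unit disk:
`tanh (h(f a, f b)/4) ≤ (1/√(1-m²)) · tanh (h(a,b)/4)` with `m = d({0}, L[a,b])`. -/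
theorem hilbert_distortion_analytic (a b : ℂ)
    (ha : ‖a‖ < 1) (hb : ‖b‖ < 1) (hab : a ≠ b)
    (f : ℂ → ℂ) (hf : DifferentiableOn ℂ f (Metric.ball 0 1))
    (hmaps : Set.MapsTo f (Metric.ball 0 1) (Metric.ball 0 1)) :
    Real.tanh (hilbertDist (f a) (f b) / 4) ≤
      (1 / Real.sqrt (1 - distToLine a b ^ 2)) * Real.tanh (hilbertDist a b / 4) := by
  have hfa : ‖f a‖ < 1 := by
    have := hmaps (by rw [mem_ball_zero_iff]; exact ha)
    rwa [mem_ball_zero_iff] at this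
  have hfb : ‖f b‖ < 1 := by
    have := hmaps (by rw [mem_ball_zero_iff]; exact hb)
    rwa [mem_ball_zero_iff] at this
  obtain ⟨hpa, hpb⟩ := pair_main a b ha hb hab
  have hsig_nonneg : 0 ≤ ‖a - b‖ /
      Real.sqrt ((1 - ‖a‖ ^ 2) * (1 - ‖b‖ ^ 2)) :=
    div_nonneg (norm_nonneg _) (Real.sqrt_nonneg _)
  by_cases hfe : f a = f b
  · have hempty : hilbertDist (f a) (f b) = 0 := by
      rw [hilbertDist]
      have : { d : ℝ | ∃ u v : ℂ, ‖u‖ = 1 ∧ ‖v‖ = 1 ∧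
          u ∈ lineThrough (f a) (f b) ∧ v ∈ lineThrough (f a) (f b) ∧
          dist u (f a) < dist u (f b) ∧ dist v (f b) < dist v (f a) ∧
          d = Real.log ((dist u (f b) * dist (f a) v) / (dist u (f a) * dist (f b) v)) }
          = (∅ : Set ℝ) := by
        ext d
        simp only [Set.mem_empty_iff_false, iff_false, Set.mem_setOf_eq]
        rintro ⟨u, v, _, _, _, _, hlt, _, _⟩
        rw [hfe] at hlt
        exact lt_irrefl _ hlt
      rw [this, Real.sSup_empty]
    rw [hempty, zero_div, Real.tanh_zero]
    refine le_trans ?_ hpb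
    positivity
  · obtain ⟨hqa, _⟩ := pair_main (f a) (f b) hfa hfb hfe
    refine le_trans hqa (le_trans ?_ hpb)
    exact r_mono _ _ (div_nonneg (norm_nonneg _) (Real.sqrt_nonneg _))
      (schwarz_pick_sigma hf hmaps ha hb)
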